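/- Let n ≥ 5 be an odd integer, m a positive integer, and C a code of length m over ℤ/4ℤ. Then: (1) Γ_C is integral if and only if C ⊆ C^⊥; (2) Γ_C is unimodular if and only if C = C^⊥; (3) Γ_C is even if and only if 8 divides wt_E(u) for every u ∈ C; (4) Γ_C is even unimodular if and only if C is Type II. -/

import Mathlib

open Finset

/-- The coefficient `g(l) = (1/4)(−1)^l (n − 2l)`. -/
noncomputable def gD (n : ℕ) (l : Fin n) : ℚ :=
  (1 / 4) * (-1 : ℚ) ^ (l : ℕ) * ((n : ℚ) - 2 * (l : ℕ))

/-- The bilinear form of `m` copies of the dual `D_n` root lattice (`n` odd),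
written in the dual basis: `B(x,y) = Σ_i Σ_j Σ_s g((s−j) mod n) x_{ij} y_{is}`. -/
noncomputable def BDodd (n m : ℕ) (x y : Fin m → Fin n → ℚ) : ℚ :=
  ∑ i, ∑ j, ∑ s, gD n (s - j) * x i j * y i s

/-- The reduction map to `(ℤ/4ℤ)^m`. -/
def rhoDodd (n m : ℕ) (x : Fin m → Fin n → ℤ) : Fin m → ZMod 4 :=
  fun i => ((∑ j, x i j : ℤ) : ZMod 4)

/-- The Euclidean weight of an element of `(ℤ/4ℤ)^m`. -/
def wtE4 (m : ℕ) (u : Fin m → ZMod 4) : ℕ :=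
  ∑ i, (u i).val ^ 2

/-- The dual code of a set of codewords over `ℤ/4ℤ`. -/
def dualCode4 (m : ℕ) (C : Set (Fin m → ZMod 4)) : Set (Fin m → ZMod 4) :=
  {u | ∀ v ∈ C, ∑ i, u i * v i = 0}

/-- The lattice `Γ_C` constructed from the code `C`. -/
def GammaD (n m : ℕ) (C : Set (Fin m → ZMod 4)) : Set (Fin m → Fin n → ℤ) :=
  {x | rhoDodd n m x ∈ C}

/-- Coercion of an integral vector to a rational vector. -/
def toQD (n m : ℕ) (x : Fin m → Fin n → ℤ) : Fin m → Fin n → ℚ :=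
  fun i j => (x i j : ℚ)

/-- The dual lattice `Γ_C^*`, taken inside the `ℚ`-valued vectors. -/
noncomputable def dualLatticeD (n m : ℕ) (C : Set (Fin m → ZMod 4)) :
    Set (Fin m → Fin n → ℚ) :=
  {z | ∀ y ∈ GammaD n m C, ∃ k : ℤ, (k : ℚ) = BDodd n m z (toQD n m y)}

/-- `Γ_C` is integral. -/
def IsIntegralD (n m : ℕ) (C : Set (Fin m → ZMod 4)) : Prop :=
  ∀ x ∈ GammaD n m C, ∀ y ∈ GammaD n m C,
    ∃ k : ℤ, (k : ℚ) = BDodd n m (toQD n m x) (toQD n m y)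

/-- `Γ_C` is even. -/
def IsEvenLatD (n m : ℕ) (C : Set (Fin m → ZMod 4)) : Prop :=
  IsIntegralD n m C ∧ ∀ x ∈ GammaD n m C,
    ∃ k : ℤ, ((2 * k : ℤ) : ℚ) = BDodd n m (toQD n m x) (toQD n m x)

/-- `Γ_C` is unimodular. -/
def IsUnimodularD (n m : ℕ) (C : Set (Fin m → ZMod 4)) : Prop :=
  dualLatticeD n m C = toQD n m '' GammaD n m C

lemma g4_dvd {n : ℕ} (hodd : Odd n) (l : ℕ) :
    (4:ℤ) ∣ (-1)^l * ((n:ℤ) - 2*l) - n := by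
  obtain ⟨b, hb⟩ := hodd
  rcases Nat.even_or_odd l with he | ho
  · rw [he.neg_one_pow]
    obtain ⟨a, ha⟩ := he
    subst hb ha
    push_cast
    omega
  · rw [ho.neg_one_pow]
    obtain ⟨a, ha⟩ := ho
    subst hb ha
    push_cast
    omega

def cD (n : ℕ) (l : Fin n) : ℤ := ((-1)^(l:ℕ) * ((n:ℤ) - 2*(l:ℕ)) - n)/4

lemma cD_spec {n : ℕ} (hodd : Odd n) (l : Fin n) :
    4 * cD n l = (-1)^(l:ℕ) * ((n:ℤ) - 2*(l:ℕ)) - n := by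
  rw [cD, Int.mul_ediv_cancel' (g4_dvd hodd l)]

lemma gD_eq_c {n : ℕ} (hodd : Odd n) (l : Fin n) :
    gD n l = (n:ℚ)/4 + (cD n l : ℚ) := by
  have h := cD_spec hodd l
  have h2 : (4 : ℚ) * (cD n l : ℚ) = ((-1)^(l:ℕ) * ((n:ℚ) - 2*(l:ℕ)) - n) := by
    exact_mod_cast congrArg (fun z : ℤ => (z : ℚ)) h
  rw [gD]
  nlinarith [h2]

lemma cD_zero {n : ℕ} [NeZero n] : cD n 0 = 0 := by
  rw [cD]
  simp

lemma val_neg {n : ℕ} [NeZero n] (l : Fin n) (hl : l ≠ 0) :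
    ((-l : Fin n) : ℕ) = n - (l : ℕ) := by
  have h0 : (l : ℕ) ≠ 0 := by
    intro h; exact hl (Fin.ext h)
  have hlt := l.isLt
  rw [Fin.neg_def]
  exact Nat.mod_eq_of_lt (by omega)

lemma neg_one_pow_sq (l : ℕ) : (-1 : ℤ)^l * (-1)^l = 1 := by
  rw [← pow_add]
  exact (Even.neg_one_pow ⟨l, rfl⟩)

lemma cD_neg {n : ℕ} [NeZero n] (hodd : Odd n) (l : Fin n) :
    cD n (-l) = cD n l := by
  by_cases hl : l = 0
  · subst hl; simp
  · have hv := val_neg l hl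
    have hlt := l.isLt
    have h0 : (l : ℕ) ≠ 0 := fun h => hl (Fin.ext h)
    have hp : (-1 : ℤ)^((-l : Fin n) : ℕ) = -(-1)^(l:ℕ) := by
      rw [hv]
      have hmul : (-1 : ℤ)^(n - (l:ℕ)) * (-1)^(l:ℕ) = (-1)^n := by
        rw [← pow_add]; congr 1; omega
      have hn' : (-1 : ℤ)^n = -1 := hodd.neg_one_pow
      have := congrArg (fun z : ℤ => z * (-1)^(l:ℕ)) hmul
      simp only [hn'] at this
      rw [mul_assoc, neg_one_pow_sq, mul_one] at this
      rw [this]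
      ring
    rw [cD, cD, hp, hv]
    have : ((n - (l:ℕ) : ℕ) : ℤ) = (n:ℤ) - (l:ℕ) := by
      push_cast [Nat.cast_sub (le_of_lt hlt)]; ring
    rw [this]
    ring_nf

section conv
variable {n : ℕ} [NeZero n]

lemma val_one_n (hn : 5 ≤ n) : ((1 : Fin n) : ℕ) = 1 := by
  rw [Fin.val_one']
  exact Nat.mod_eq_of_lt (by omega)

lemma val_neg_one_n (hn : 5 ≤ n) : ((-1 : Fin n) : ℕ) = n - 1 := by
  rw [val_neg _ (by
    intro h
    have := congrArg Fin.val h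
    rw [val_one_n hn] at this
    simp at this), val_one_n hn]

lemma conv (hn : 5 ≤ n) (hodd : Odd n) (d : Fin n) :
    2 * gD n d + gD n (1 + d) + gD n (-1 + d) = if d = 0 then 1 else 0 := by
  have hc1 : ((n-1:ℕ):ℚ) = (n:ℚ) - 1 := by
    rw [Nat.cast_sub (by omega)]; norm_num
  have hc2 : ((n-2:ℕ):ℚ) = (n:ℚ) - 2 := by
    rw [Nat.cast_sub (by omega)]; norm_num
  have hev : (-1:ℚ)^(n-1) = 1 := (Nat.Odd.sub_odd hodd odd_one).neg_one_pow
  by_cases h0 : d = 0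
  · subst h0
    rw [add_zero, add_zero]
    have e1 : ((1 : Fin n) : ℕ) = 1 := val_one_n hn
    have e2 : ((-1 : Fin n) : ℕ) = n - 1 := val_neg_one_n hn
    have e0 : ((0 : Fin n) : ℕ) = 0 := rfl
    simp only [gD, e0, e1, e2, if_pos rfl, hc1, hev]
    push_cast
    ring
  · rw [if_neg h0]
    have hv0 : 0 < d.val := Nat.pos_of_ne_zero (fun h => h0 (Fin.ext h))
    have hvlt := d.isLt
    by_cases hlast : d.val = n - 1
    · have e1 : ((1 + d : Fin n) : ℕ) = 0 := by
        rw [Fin.add_def, val_one_n hn, hlast]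
        show (1 + (n-1)) % n = 0
        have e : 1 + (n-1) = n := by omega
        rw [e, Nat.mod_self]
      have e2 : ((-1 + d : Fin n) : ℕ) = n - 2 := by
        rw [Fin.add_def, val_neg_one_n hn, hlast]
        show ((n-1) + (n-1)) % n = n - 2
        have e : (n-1) + (n-1) = n + (n-2) := by omega
        rw [e, Nat.add_mod_left]
        exact Nat.mod_eq_of_lt (by omega)
      have hod2 : (-1:ℚ)^(n-2) = -1 :=
        (Nat.Odd.sub_even (by omega) hodd (even_iff_two_dvd.mpr ⟨1, rfl⟩)).neg_one_pow
      simp only [gD, e1, e2, hlast, hc1, hc2, hev, hod2]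
      push_cast
      ring
    · obtain ⟨w, hw⟩ : ∃ w, d.val = w + 1 := ⟨d.val - 1, by omega⟩
      have e1 : ((1 + d : Fin n) : ℕ) = w + 2 := by
        rw [Fin.add_def, val_one_n hn, hw]
        show (1 + (w+1)) % n = w + 2
        have e : 1 + (w+1) = w + 2 := by omega
        rw [e]
        exact Nat.mod_eq_of_lt (by omega)
      have e2 : ((-1 + d : Fin n) : ℕ) = w := by
        rw [Fin.add_def, val_neg_one_n hn, hw]
        show ((n-1) + (w+1)) % n = w
        have e : (n-1) + (w+1) = n + w := by omega
        rw [e, Nat.add_mod_left]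
        exact Nat.mod_eq_of_lt (by omega)
      simp only [gD, e1, e2, hw]
      rw [pow_succ, pow_succ, pow_succ]
      push_cast
      ring
end conv

def hD (n : ℕ) [NeZero n] (l : Fin n) : ℤ :=
  (if l = 0 then 2 else 0) + (if l = 1 then 1 else 0) + (if l = -1 then 1 else 0)

section s3
variable {n : ℕ} [NeZero n]

lemma sum_hD_mul (F : Fin n → ℚ) (j : Fin n) :
    ∑ s, (hD n (s - j) : ℤ) • F s = 2 * F j + F (1 + j) + F (-1 + j) := by
  simp only [hD, zsmul_eq_mul]
  push_cast
  simp only [add_mul, Finset.sum_add_distrib, ite_mul, zero_mul, one_mul,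
    sub_eq_iff_eq_add, zero_add]
  simp [Finset.sum_ite_eq', two_mul]

lemma conv_sum (hn : 5 ≤ n) (hodd : Odd n) (j t : Fin n) :
    ∑ s, (hD n (s - j) : ℤ) • gD n (s - t) = if j = t then 1 else 0 := by
  rw [sum_hD_mul (fun s => gD n (s - t)) j]
  have h := conv hn hodd (j - t)
  simp only [← add_sub_assoc] at h
  rw [h]
  congr 1
  simp [sub_eq_zero]

lemma hD_rowsum (hn : 5 ≤ n) (j : Fin n) : ∑ s, (hD n (s - j) : ℚ) = 4 := by
  have h := sum_hD_mul (fun _ => (1:ℚ)) j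
  simp only [zsmul_eq_mul, mul_one] at h
  rw [h]
  norm_num
end s3

lemma odd_sq_dvd {n : ℕ} (hodd : Odd n) : (8:ℤ) ∣ (n:ℤ)^2 - 1 := by
  obtain ⟨b, hb⟩ := hodd
  have hbz : (n:ℤ) = 2*(b:ℤ)+1 := by exact_mod_cast congrArg (Nat.cast : ℕ → ℤ) hb
  obtain ⟨t, ht⟩ := Int.even_mul_succ_self (b:ℤ)
  exact ⟨t, by rw [hbz]; linear_combination 4*ht⟩

lemma dvd_of_dvd_mul_odd {n : ℕ} (hodd : Odd n) {k S : ℤ} (hk8 : k ∣ 8)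
    (h : k ∣ (n:ℤ) * S) : k ∣ S := by
  have h8 := odd_sq_dvd hodd
  have hrw : S = (n:ℤ) * ((n:ℤ)*S) - ((n:ℤ)^2 - 1)*S := by ring
  rw [hrw]
  exact dvd_sub (h.mul_left _) ((hk8.trans h8).mul_right S)

lemma B_decomp {n m : ℕ} (hodd : Odd n) (x y : Fin m → Fin n → ℤ) :
    BDodd n m (toQD n m x) (toQD n m y)
      = (n:ℚ)/4 * ((∑ i, (∑ j, x i j) * (∑ j, y i j) : ℤ) : ℚ)
        + ((∑ i, ∑ j, ∑ s, cD n (s-j) * x i j * y i s : ℤ) : ℚ) := by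
  unfold BDodd toQD
  push_cast
  have hi : ∀ i : Fin m, ∑ j, ∑ s, gD n (s-j) * (x i j : ℚ) * (y i s : ℚ)
      = (n:ℚ)/4 * ((∑ j, (x i j:ℚ)) * (∑ s, (y i s:ℚ)))
        + ∑ j, ∑ s, (cD n (s-j) : ℚ) * x i j * y i s := by
    intro i
    have h1 : ∀ j s : Fin n, gD n (s-j) * (x i j : ℚ) * (y i s : ℚ)
        = (n:ℚ)/4 * ((x i j : ℚ) * (y i s : ℚ)) + (cD n (s-j) : ℚ) * x i j * y i s := by
      intro j s; rw [gD_eq_c hodd]; ring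
    simp only [h1, Finset.sum_add_distrib]
    congr 1
    rw [Finset.sum_mul_sum, Finset.mul_sum]
    apply Finset.sum_congr rfl
    intro j _
    rw [Finset.mul_sum]
  calc ∑ i, ∑ j, ∑ s, gD n (s-j) * (x i j : ℚ) * (y i s : ℚ)
      = ∑ i, ((n:ℚ)/4 * ((∑ j, (x i j:ℚ)) * (∑ s, (y i s:ℚ)))
        + ∑ j, ∑ s, (cD n (s-j) : ℚ) * x i j * y i s) :=
        Finset.sum_congr rfl (fun i _ => hi i)
    _ = _ := by rw [Finset.sum_add_distrib, ← Finset.mul_sum]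

lemma int_iff {n m : ℕ} (hodd : Odd n) (x y : Fin m → Fin n → ℤ) :
    (∃ k : ℤ, (k:ℚ) = BDodd n m (toQD n m x) (toQD n m y))
      ↔ (4:ℤ) ∣ ∑ i, (∑ j, x i j) * (∑ j, y i j) := by
  rw [B_decomp hodd]
  set S := ∑ i, (∑ j, x i j) * (∑ j, y i j) with hS
  set K := ∑ i, ∑ j, ∑ s, cD n (s-j) * x i j * y i s with hK
  constructor
  · rintro ⟨k, hk⟩
    have h4 : (4:ℚ) * k = (n:ℚ) * S + 4 * K := by rw [hk]; ring
    have h4' : (4:ℤ) * k = (n:ℤ) * S + 4 * K := by exact_mod_cast h4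
    have hd : (4:ℤ) ∣ (n:ℤ) * S := ⟨k - K, by omega⟩
    exact dvd_of_dvd_mul_odd hodd (by norm_num) hd
  · rintro ⟨t, ht⟩
    refine ⟨n * t + K, ?_⟩
    rw [ht]
    push_cast
    ring

lemma K_even {n m : ℕ} (hn : 5 ≤ n) (hodd : Odd n) (x : Fin m → Fin n → ℤ) :
    (2:ℤ) ∣ ∑ i, ∑ j, ∑ s, cD n (s-j) * x i j * x i s := by
  haveI : NeZero n := ⟨by omega⟩
  apply Finset.dvd_sum
  intro i _
  set R := ∑ j, ∑ s, cD n (s-j) * x i j * x i s with hR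
  have hz : ((R : ℤ) : ZMod 2) = 0 := by
    rw [hR]
    push_cast
    rw [← Finset.sum_product']
    apply Finset.sum_ninvolution (g := Prod.swap)
    · intro p
      have hsym : (cD n (p.1 - p.2) : ZMod 2) = (cD n (p.2 - p.1) : ZMod 2) := by
        have he : p.1 - p.2 = -(p.2 - p.1) := (neg_sub _ _).symm
        rw [he, cD_neg hodd]
      simp only [Prod.fst_swap, Prod.snd_swap]
      rw [hsym]
      have h2 : ∀ a : ZMod 2, a + a = 0 := by decide
      rw [show (cD n (p.2-p.1) : ZMod 2) * (x i p.1 : ZMod 2) * (x i p.2 : ZMod 2)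
          + (cD n (p.2-p.1) : ZMod 2) * (x i p.2 : ZMod 2) * (x i p.1 : ZMod 2)
          = (cD n (p.2-p.1) : ZMod 2) * (x i p.1 : ZMod 2) * (x i p.2 : ZMod 2)
          + (cD n (p.2-p.1) : ZMod 2) * (x i p.1 : ZMod 2) * (x i p.2 : ZMod 2) by ring]
      exact h2 _
    · intro p hne
      intro hswap
      apply hne
      have h12 : p.1 = p.2 := by
        have := congrArg Prod.fst hswap
        simpa using this.symm
      show (cD n (p.2 - p.1) : ZMod 2) * _ * _ = 0
      rw [h12, sub_self, cD_zero]
      push_cast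
      ring
    · intro p; exact Finset.mem_univ _
    · intro p; exact Prod.swap_swap p
  exact_mod_cast (ZMod.intCast_zmod_eq_zero_iff_dvd R 2).mp hz

lemma even_iff_arith {n m : ℕ} (hn : 5 ≤ n) (hodd : Odd n) (x : Fin m → Fin n → ℤ) :
    (∃ k : ℤ, ((2*k : ℤ):ℚ) = BDodd n m (toQD n m x) (toQD n m x))
      ↔ (8:ℤ) ∣ ∑ i, (∑ j, x i j) * (∑ j, x i j) := by
  rw [B_decomp hodd]
  set S := ∑ i, (∑ j, x i j) * (∑ j, x i j) with hS
  obtain ⟨K', hK'⟩ := K_even hn hodd x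
  rw [hK']
  constructor
  · rintro ⟨k, hk⟩
    have h4 : (8:ℚ) * k = (n:ℚ) * S + 8 * K' := by
      push_cast at hk
      linear_combination 4 * hk
    have h4' : (8:ℤ) * k = (n:ℤ) * S + 8 * K' := by exact_mod_cast h4
    have hd : (8:ℤ) ∣ (n:ℤ) * S := ⟨k - K', by omega⟩
    exact dvd_of_dvd_mul_odd hodd (by norm_num) hd
  · rintro ⟨t, ht⟩
    refine ⟨n * t + K', ?_⟩
    rw [ht]
    push_cast
    ring

lemma S_cast {n m : ℕ} (x y : Fin m → Fin n → ℤ) :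
    ((∑ i, (∑ j, x i j) * (∑ j, y i j) : ℤ) : ZMod 4)
      = ∑ i, rhoDodd n m x i * rhoDodd n m y i := by
  unfold rhoDodd
  push_cast
  rfl

lemma dvd4_iff {n m : ℕ} (x y : Fin m → Fin n → ℤ) :
    ((4:ℤ) ∣ ∑ i, (∑ j, x i j) * (∑ j, y i j))
      ↔ ∑ i, rhoDodd n m x i * rhoDodd n m y i = 0 := by
  rw [← S_cast]
  exact_mod_cast (ZMod.intCast_zmod_eq_zero_iff_dvd _ 4).symm

def vecOf (n m : ℕ) [NeZero n] (u : Fin m → ZMod 4) : Fin m → Fin n → ℤ :=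
  fun i j => if j = 0 then ((u i).val : ℤ) else 0

lemma vecOf_sum {n m : ℕ} [NeZero n] (u : Fin m → ZMod 4) (i : Fin m) :
    ∑ j, vecOf n m u i j = ((u i).val : ℤ) := by
  simp [vecOf, Finset.sum_ite_eq']

lemma rho_vecOf {n m : ℕ} [NeZero n] (u : Fin m → ZMod 4) :
    rhoDodd n m (vecOf n m u) = u := by
  funext i
  unfold rhoDodd
  rw [vecOf_sum]
  push_cast
  simp [ZMod.natCast_val, ZMod.cast_id]

lemma sigma_sub_val {n m : ℕ} (x : Fin m → Fin n → ℤ) (i : Fin m) :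
    (4:ℤ) ∣ (∑ j, x i j) - ((rhoDodd n m x i).val : ℤ) := by
  have h : (((∑ j, x i j) - ((rhoDodd n m x i).val : ℤ) : ℤ) : ZMod 4) = 0 := by
    push_cast
    unfold rhoDodd
    push_cast
    simp [ZMod.natCast_val, ZMod.cast_id]
  exact_mod_cast (ZMod.intCast_zmod_eq_zero_iff_dvd _ 4).mp h

lemma sq_cong8 {p q : ℤ} (h : (4:ℤ) ∣ p - q) : (8:ℤ) ∣ p^2 - q^2 := by
  obtain ⟨t, ht⟩ := h
  have hp : p = q + 4*t := by omega
  exact ⟨q*t + 2*t^2, by rw [hp]; ring⟩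

lemma sq_mod8 {n m : ℕ} (x : Fin m → Fin n → ℤ) (i : Fin m) :
    (8:ℤ) ∣ (∑ j, x i j) * (∑ j, x i j) - ((rhoDodd n m x i).val : ℤ)^2 := by
  have h := sq_cong8 (sigma_sub_val x i)
  have e : (∑ j, x i j) * (∑ j, x i j) = (∑ j, x i j)^2 := by ring
  rw [e]
  exact h

lemma wt_iff {n m : ℕ} (x : Fin m → Fin n → ℤ) :
    ((8:ℤ) ∣ ∑ i, (∑ j, x i j) * (∑ j, x i j)) ↔ 8 ∣ wtE4 m (rhoDodd n m x) := by
  have hdiff : (8:ℤ) ∣ (∑ i, (∑ j, x i j) * (∑ j, x i j)) - (wtE4 m (rhoDodd n m x) : ℤ) := by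
    unfold wtE4
    push_cast
    rw [← Finset.sum_sub_distrib]
    exact Finset.dvd_sum (fun i _ => sq_mod8 x i)
  constructor
  · intro h
    have h2 : (8:ℤ) ∣ (wtE4 m (rhoDodd n m x) : ℤ) := by
      have e : (wtE4 m (rhoDodd n m x) : ℤ)
          = (∑ i, (∑ j, x i j) * (∑ j, x i j))
            - ((∑ i, (∑ j, x i j) * (∑ j, x i j)) - (wtE4 m (rhoDodd n m x) : ℤ)) := by ring
      rw [e]
      exact dvd_sub h hdiff
    exact_mod_cast h2
  · intro h
    have h2 : (8:ℤ) ∣ (wtE4 m (rhoDodd n m x) : ℤ) := by exact_mod_cast h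
    have e : (∑ i, (∑ j, x i j) * (∑ j, x i j))
        = (wtE4 m (rhoDodd n m x) : ℤ)
          + ((∑ i, (∑ j, x i j) * (∑ j, x i j)) - (wtE4 m (rhoDodd n m x) : ℤ)) := by ring
    rw [e]
    exact dvd_add h2 hdiff

lemma dot_zero_of_wt {m : ℕ} (u v : Fin m → ZMod 4)
    (h1 : 8 ∣ wtE4 m u) (h2 : 8 ∣ wtE4 m v) (h3 : 8 ∣ wtE4 m (u + v)) :
    ∑ i, u i * v i = 0 := by
  have key : (8:ℤ) ∣ (wtE4 m (u+v) : ℤ) - wtE4 m u - wtE4 m v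
      - 2 * ∑ i, ((u i).val : ℤ) * ((v i).val : ℤ) := by
    have heq : (wtE4 m (u+v) : ℤ) - wtE4 m u - wtE4 m v
        - 2 * ∑ i, ((u i).val : ℤ) * ((v i).val : ℤ)
        = ∑ i, ((((u+v) i).val : ℤ)^2 - ((u i).val : ℤ)^2 - ((v i).val : ℤ)^2
            - 2 * (((u i).val : ℤ) * ((v i).val : ℤ))) := by
      unfold wtE4
      push_cast
      rw [Finset.mul_sum, ← Finset.sum_sub_distrib, ← Finset.sum_sub_distrib,
        ← Finset.sum_sub_distrib]
    rw [heq]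
    apply Finset.dvd_sum
    intro i _
    have hmod : (4:ℤ) ∣ (((u+v) i).val : ℤ) - (((u i).val : ℤ) + ((v i).val : ℤ)) := by
      have hc : ((((((u+v) i).val : ℤ) - (((u i).val : ℤ) + ((v i).val : ℤ))) : ℤ) : ZMod 4) = 0 := by
        push_cast
        simp [ZMod.natCast_val, ZMod.cast_id]
      exact_mod_cast (ZMod.intCast_zmod_eq_zero_iff_dvd
        ((((u+v) i).val : ℤ) - (((u i).val : ℤ) + ((v i).val : ℤ))) 4).mp hc
    have h8 := sq_cong8 hmod
    have e : (((u+v) i).val : ℤ)^2 - ((u i).val : ℤ)^2 - ((v i).val : ℤ)^2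
        - 2 * (((u i).val : ℤ) * ((v i).val : ℤ))
        = (((u+v) i).val : ℤ)^2 - ((((u i).val : ℤ) + ((v i).val : ℤ)))^2 := by ring
    rw [e]
    exact h8
  have h1' : (8:ℤ) ∣ (wtE4 m u : ℤ) := by exact_mod_cast h1
  have h2' : (8:ℤ) ∣ (wtE4 m v : ℤ) := by exact_mod_cast h2
  have h3' : (8:ℤ) ∣ (wtE4 m (u+v) : ℤ) := by exact_mod_cast h3
  have hdot : (4:ℤ) ∣ ∑ i, ((u i).val : ℤ) * ((v i).val : ℤ) := by
    obtain ⟨a, ha⟩ := h1'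
    obtain ⟨b, hb⟩ := h2'
    obtain ⟨c, hc⟩ := h3'
    obtain ⟨d, hd⟩ := key
    omega
  have hcast : ((∑ i, ((u i).val : ℤ) * ((v i).val : ℤ) : ℤ) : ZMod 4) = ∑ i, u i * v i := by
    push_cast
    simp [ZMod.natCast_val, ZMod.cast_id]
  have hdot' : ((∑ i, ((u i).val : ℤ) * ((v i).val : ℤ) : ℤ) : ZMod 4) = 0 :=
    (ZMod.intCast_zmod_eq_zero_iff_dvd _ 4).mpr (by exact_mod_cast hdot)
  rw [← hcast]
  exact hdot'

lemma part1 {n m : ℕ} (hn : 5 ≤ n) (hodd : Odd n)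
    (C : Submodule (ZMod 4) (Fin m → ZMod 4)) :
    IsIntegralD n m (C : Set _) ↔ (C : Set _) ⊆ dualCode4 m (C : Set _) := by
  haveI : NeZero n := ⟨by omega⟩
  constructor
  · intro hInt u hu v hv
    have hx : vecOf n m u ∈ GammaD n m (C : Set _) := by
      simp only [GammaD, Set.mem_setOf_eq, rho_vecOf]
      exact hu
    have hy : vecOf n m v ∈ GammaD n m (C : Set _) := by
      simp only [GammaD, Set.mem_setOf_eq, rho_vecOf]
      exact hv
    have h := hInt _ hx _ hy
    rw [int_iff hodd, dvd4_iff, rho_vecOf, rho_vecOf] at h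
    exact h
  · intro hsub x hx y hy
    rw [int_iff hodd, dvd4_iff]
    exact hsub hx _ hy

lemma part3 {n m : ℕ} (hn : 5 ≤ n) (hodd : Odd n)
    (C : Submodule (ZMod 4) (Fin m → ZMod 4)) :
    IsEvenLatD n m (C : Set _) ↔ ∀ u ∈ C, 8 ∣ wtE4 m u := by
  haveI : NeZero n := ⟨by omega⟩
  constructor
  · rintro ⟨hInt, hEven⟩ u hu
    have hx : vecOf n m u ∈ GammaD n m (C : Set _) := by
      simp only [GammaD, Set.mem_setOf_eq, rho_vecOf]
      exact hu
    have h := hEven _ hx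
    rw [even_iff_arith hn hodd, wt_iff, rho_vecOf] at h
    exact h
  · intro hwt
    constructor
    · refine (part1 hn hodd C).mpr ?_
      intro u hu v hv
      exact dot_zero_of_wt u v (hwt u hu) (hwt v hv) (hwt (u+v) (C.add_mem hu hv))
    · intro x hx
      rw [even_iff_arith hn hodd, wt_iff]
      exact hwt _ hx

lemma B_rows {n m : ℕ} (z y : Fin m → Fin n → ℚ) :
    BDodd n m z y = ∑ i, ∑ s, (∑ j, gD n (s - j) * z i j) * y i s := by
  unfold BDodd
  apply Finset.sum_congr rfl; intro i _
  rw [Finset.sum_comm]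
  apply Finset.sum_congr rfl; intro s _
  rw [Finset.sum_mul]

def deltaV (n m : ℕ) [NeZero n] (i : Fin m) (s : Fin n) (c : ℤ) : Fin m → Fin n → ℤ :=
  fun i' s' => if i' = i then (if s' = s then c else 0) else 0

def delta2V (n m : ℕ) [NeZero n] (i : Fin m) (s : Fin n) : Fin m → Fin n → ℤ :=
  fun i' s' => if i' = i then ((if s' = s then 1 else 0) - (if s' = 0 then 1 else 0)) else 0

lemma B_deltaV {n m : ℕ} [NeZero n] (z : Fin m → Fin n → ℚ) (i : Fin m) (s : Fin n) (c : ℤ) :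
    BDodd n m z (toQD n m (deltaV n m i s c))
      = (c:ℚ) * ∑ j, gD n (s - j) * z i j := by
  rw [B_rows]
  unfold toQD deltaV
  have h1 : ∀ i' : Fin m, ∑ s' : Fin n, (∑ j, gD n (s' - j) * z i' j)
      * (((if i' = i then (if s' = s then c else 0) else 0) : ℤ) : ℚ)
      = if i' = i then (c:ℚ) * ∑ j, gD n (s - j) * z i j else 0 := by
    intro i'
    by_cases h : i' = i
    · subst h
      simp only [if_pos rfl]
      push_cast
      simp only [mul_ite, mul_zero]
      rw [Finset.sum_ite_eq' Finset.univ s (fun s' => (∑ j, gD n (s' - j) * z i' j) * (c:ℚ))]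
      simp [mul_comm]
    · simp [h]
  rw [Finset.sum_congr rfl (fun i' _ => h1 i')]
  simp [Finset.sum_ite_eq']

lemma rho_deltaV {n m : ℕ} [NeZero n] (i : Fin m) (s : Fin n) :
    rhoDodd n m (deltaV n m i s 4) = 0 := by
  funext i'
  unfold rhoDodd deltaV
  by_cases h : i' = i
  · simp [h, Finset.sum_ite_eq']
    decide
  · simp [h]

lemma B_delta2V {n m : ℕ} [NeZero n] (z : Fin m → Fin n → ℚ) (i : Fin m) (s : Fin n) :
    BDodd n m z (toQD n m (delta2V n m i s))
      = (∑ j, gD n (s - j) * z i j) - (∑ j, gD n ((0:Fin n) - j) * z i j) := by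
  rw [B_rows]
  unfold toQD delta2V
  have h1 : ∀ i' : Fin m, ∑ s' : Fin n, (∑ j, gD n (s' - j) * z i' j)
      * (((if i' = i then ((if s' = s then 1 else 0) - (if s' = (0:Fin n) then 1 else 0)) else 0) : ℤ) : ℚ)
      = if i' = i then ((∑ j, gD n (s - j) * z i j) - (∑ j, gD n ((0:Fin n) - j) * z i j)) else 0 := by
    intro i'
    by_cases h : i' = i
    · subst h
      simp only [if_pos rfl]
      push_cast
      simp only [mul_sub, mul_ite, mul_zero, mul_one, Finset.sum_sub_distrib]
      rw [Finset.sum_ite_eq' Finset.univ s (fun s' => (∑ j, gD n (s' - j) * z i' j))]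
      rw [Finset.sum_ite_eq' Finset.univ (0:Fin n) (fun s' => (∑ j, gD n (s' - j) * z i' j))]
      simp
    · simp [h]
  rw [Finset.sum_congr rfl (fun i' _ => h1 i')]
  simp [Finset.sum_ite_eq']

lemma rho_delta2V {n m : ℕ} [NeZero n] (i : Fin m) (s : Fin n) :
    rhoDodd n m (delta2V n m i s) = 0 := by
  funext i'
  unfold rhoDodd delta2V
  by_cases h : i' = i
  · simp [h, Finset.sum_sub_distrib, Finset.sum_ite_eq']
  · simp [h]

lemma dual_char {n m : ℕ} (hn : 5 ≤ n) (hodd : Odd n)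
    (C : Submodule (ZMod 4) (Fin m → ZMod 4)) :
    dualLatticeD n m (C : Set _) = toQD n m '' GammaD n m (dualCode4 m (C : Set _)) := by
  haveI : NeZero n := ⟨by omega⟩
  ext z
  constructor
  · intro hz
    set W : Fin m → Fin n → ℚ := fun i s => ∑ j, gD n (s - j) * z i j with hW
    have hmem0 : ∀ (y : Fin m → Fin n → ℤ), rhoDodd n m y = 0 →
        y ∈ GammaD n m (C : Set _) := by
      intro y hy
      simp only [GammaD, Set.mem_setOf_eq, hy]
      exact C.zero_mem
    have h4 : ∀ i, ∃ k : ℤ, (k:ℚ) = 4 * W i 0 := by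
      intro i
      obtain ⟨k, hk⟩ := hz (deltaV n m i 0 4) (hmem0 _ (rho_deltaV i 0))
      rw [B_deltaV] at hk
      refine ⟨k, ?_⟩
      rw [hk]
      norm_num [hW, zero_sub]
    have h2 : ∀ i s, ∃ k : ℤ, (k:ℚ) = W i s - W i 0 := by
      intro i s
      obtain ⟨k, hk⟩ := hz (delta2V n m i s) (hmem0 _ (rho_delta2V i s))
      rw [B_delta2V] at hk
      refine ⟨k, ?_⟩
      rw [hk]
    choose k4 hk4 using h4
    choose k2 hk2 using h2
    set x : Fin m → Fin n → ℤ := fun i j => (∑ s, hD n (s - j) * k2 i s) + k4 i with hx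
    have hxz : toQD n m x = z := by
      funext i j
      show (((∑ s, hD n (s - j) * k2 i s) + k4 i : ℤ) : ℚ) = z i j
      push_cast
      have key : ∑ s, (hD n (s - j) : ℚ) * W i s = z i j := by
        have e1 : ∀ s : Fin n, (hD n (s - j) : ℚ) * W i s
            = ∑ t, (hD n (s - j) : ℚ) * (gD n (s - t) * z i t) := by
          intro s
          rw [hW]
          exact Finset.mul_sum _ _ _
        rw [Finset.sum_congr rfl (fun s _ => e1 s), Finset.sum_comm]
        have e2 : ∀ t : Fin n, ∑ s, (hD n (s - j) : ℚ) * (gD n (s - t) * z i t)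
            = (if j = t then 1 else 0) * z i t := by
          intro t
          simp only [← mul_assoc]
          rw [← Finset.sum_mul]
          have hc := conv_sum hn hodd j t
          simp only [zsmul_eq_mul] at hc
          rw [hc]
        rw [Finset.sum_congr rfl (fun t _ => e2 t)]
        simp [Finset.sum_ite_eq]
      calc (∑ s, (hD n (s - j) : ℚ) * (k2 i s : ℚ)) + (k4 i : ℚ)
          = (∑ s, (hD n (s - j) : ℚ) * (W i s - W i 0)) + 4 * W i 0 := by
            rw [hk4 i]
            congr 1
            exact Finset.sum_congr rfl (fun s _ => by rw [hk2 i s])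
        _ = (∑ s, (hD n (s - j) : ℚ) * W i s) - (∑ s, (hD n (s - j) : ℚ)) * W i 0
              + 4 * W i 0 := by
            simp only [mul_sub, Finset.sum_sub_distrib, Finset.sum_mul]
        _ = ∑ s, (hD n (s - j) : ℚ) * W i s := by
            rw [hD_rowsum hn]; ring
        _ = z i j := key
    refine ⟨x, ?_, hxz⟩
    simp only [GammaD, Set.mem_setOf_eq]
    intro v hv
    have hy : vecOf n m v ∈ GammaD n m (C : Set _) := by
      simp only [GammaD, Set.mem_setOf_eq, rho_vecOf]
      exact hv
    obtain ⟨k, hk⟩ := hz _ hy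
    rw [← hxz] at hk
    have : (4:ℤ) ∣ ∑ i, (∑ j, x i j) * (∑ j, vecOf n m v i j) :=
      (int_iff hodd x (vecOf n m v)).mp ⟨k, hk⟩
    rw [dvd4_iff, rho_vecOf] at this
    exact this
  · rintro ⟨x, hx, rfl⟩ y hy
    rw [int_iff hodd, dvd4_iff]
    exact hx _ hy

lemma part2 {n m : ℕ} (hn : 5 ≤ n) (hodd : Odd n)
    (C : Submodule (ZMod 4) (Fin m → ZMod 4)) :
    IsUnimodularD n m (C : Set _) ↔ (C : Set _) = dualCode4 m (C : Set _) := by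
  haveI : NeZero n := ⟨by omega⟩
  unfold IsUnimodularD
  rw [dual_char hn hodd C]
  constructor
  · intro h
    have hinj : Function.Injective (toQD n m) := by
      intro a b hab
      funext i j
      have := congrFun (congrFun hab i) j
      simpa [toQD] using this
    have hGamma : GammaD n m (dualCode4 m (C : Set _)) = GammaD n m (C : Set _) :=
      (Set.image_eq_image hinj).mp h
    ext u
    constructor
    · intro hu
      have h1 : vecOf n m u ∈ GammaD n m (C : Set _) := by
        simp only [GammaD, Set.mem_setOf_eq, rho_vecOf]
        exact hu
      rw [← hGamma] at h1
      simp only [GammaD, Set.mem_setOf_eq, rho_vecOf] at h1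
      exact h1
    · intro hu
      have h1 : vecOf n m u ∈ GammaD n m (dualCode4 m (C : Set _)) := by
        simp only [GammaD, Set.mem_setOf_eq, rho_vecOf]
        exact hu
      rw [hGamma] at h1
      simp only [GammaD, Set.mem_setOf_eq, rho_vecOf] at h1
      exact h1
  · intro h
    rw [← h]


theorem stmt8 (n m : ℕ) (hn : 5 ≤ n) (hodd : Odd n) (hm : 0 < m)
    (C : Submodule (ZMod 4) (Fin m → ZMod 4)) :
    (IsIntegralD n m (C : Set _) ↔ (C : Set _) ⊆ dualCode4 m (C : Set _)) ∧
    (IsUnimodularD n m (C : Set _) ↔ (C : Set _) = dualCode4 m (C : Set _)) ∧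
    (IsEvenLatD n m (C : Set _) ↔ ∀ u ∈ C, 8 ∣ wtE4 m u) ∧
    ((IsEvenLatD n m (C : Set _) ∧ IsUnimodularD n m (C : Set _)) ↔
      ((C : Set _) = dualCode4 m (C : Set _) ∧ ∀ u ∈ C, 8 ∣ wtE4 m u)) := by
  refine ⟨part1 hn hodd C, part2 hn hodd C, part3 hn hodd C, ?_⟩
  rw [part3 hn hodd C, part2 hn hodd C]
  tauto
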